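/- Let d be the pseudometric on ℕ_{≥1} × ℕ_{≥1} defined by d((n,m),(n',m')) = 0 if n = n' and m = m'; 0 if n = n', min{m,m'} = 1 and max{m,m'} > n; 0 if n = n' and min{m,m'} > n; 2^{−n} if n = n' and none of the previous cases hold; and 2·∑_{k=min{n,n'}}^{max{n,n'}} k^{−2} if n ≠ n', and let X be the associated quotient metric space. Then X has infinite Assouad dimension: for every n, the closed ball B((n,1), 2^{−n}) contains n points that are pairwise at distance exactly 2^{−n}, so N(B((n,1),2^{−n}), 2^{−(n+1)}) ≥ n, and hence there are no constants C > 0 and α ≥ 0 with sup_x N(B(x,R),r) ≤ C·(R/r)^α for all 0 < r < R < 1. -/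

import Mathlib

open Finset

/-- The distance function on `ℕ≥1 × ℕ≥1` from the paper:
`d((n,m),(n',m')) = 0` if `n = n'` and `m = m'`; `0` if `n = n'`, `min{m,m'} = 1` and
`max{m,m'} > n`; `0` if `n = n'` and `min{m,m'} > n`; `2^{-n}` if `n = n'` and none of the
previous cases hold; and `2·∑_{k=min{n,n'}}^{max{n,n'}} k^{-2}` if `n ≠ n'`. -/
noncomputable def starExDist (p q : ℕ+ × ℕ+) : ℝ :=
  if p.1 = q.1 then
    if p.2 = q.2 then 0
    else if min p.2 q.2 = 1 ∧ (p.1 : ℕ) < (max p.2 q.2 : ℕ) then 0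
    else if (p.1 : ℕ) < (min p.2 q.2 : ℕ) then 0
    else (1 / 2 : ℝ) ^ (p.1 : ℕ)
  else 2 * ∑ k ∈ Finset.Icc ((min p.1 q.1 : ℕ+) : ℕ) ((max p.1 q.1 : ℕ+) : ℕ), ((k : ℝ) ^ 2)⁻¹

lemma starExDist_same_row (n m m' : ℕ+) (hm : m ≤ n) (hm' : m' ≤ n) (hne : m ≠ m') :
    starExDist (n, m) (n, m') = (1 / 2 : ℝ) ^ (n : ℕ) := by
  unfold starExDist
  simp only
  rw [if_pos trivial, if_neg hne, if_neg, if_neg]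
  · have : (m ⊓ m' : ℕ+) ≤ n := le_trans inf_le_left hm
    exact not_lt.mpr (by exact_mod_cast this)
  · rintro ⟨-, h⟩
    have : (m ⊔ m' : ℕ+) ≤ n := sup_le hm hm'
    exact absurd h (not_lt.mpr (by exact_mod_cast this))


/-- The quotient metric space of `starExDist` has infinite Assouad
dimension: for every `n` the closed ball `B((n,1), 2^{-n})` contains `n` points that are
pairwise at distance exactly `2^{-n}`, so every cover of this ball by sets of diameter at
most `2^{-(n+1)}` needs at least `n` sets, and hence there are no constants `C > 0`, `α ≥ 0`
realising the Assouad covering bound. (Balls, diameters and covering numbers are expressed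
directly through the pseudometric `starExDist`; they agree with those of the quotient
metric space.) -/
theorem starExDist_infinite_assouad :
    -- n points of the ball `B((n,1), 2^{-n})`, pairwise at distance exactly `2^{-n}`
    (∀ n : ℕ+, ∃ S : Finset (ℕ+ × ℕ+), S.card = (n : ℕ) ∧
      (∀ p ∈ S, starExDist (n, 1) p ≤ (1 / 2 : ℝ) ^ (n : ℕ)) ∧
      (∀ p ∈ S, ∀ q ∈ S, p ≠ q → starExDist p q = (1 / 2 : ℝ) ^ (n : ℕ))) ∧
    -- hence `N(B((n,1),2^{-n}), 2^{-(n+1)}) ≥ n`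
    (∀ n : ℕ+, ∀ 𝒰 : Finset (Set (ℕ+ × ℕ+)),
      (∀ U ∈ 𝒰, ∀ a ∈ U, ∀ b ∈ U, starExDist a b ≤ (1 / 2 : ℝ) ^ ((n : ℕ) + 1)) →
      ({p : ℕ+ × ℕ+ | starExDist (n, 1) p ≤ (1 / 2 : ℝ) ^ (n : ℕ)} ⊆ ⋃ U ∈ 𝒰, U) →
      (n : ℕ) ≤ 𝒰.card) ∧
    -- and the Assouad dimension is infinite
    ¬ ∃ α : ℝ, 0 ≤ α ∧ ∃ C : ℝ, 0 < C ∧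
      ∀ (x : ℕ+ × ℕ+) (R r : ℝ), 0 < r → r < R → R < 1 →
        ∃ 𝒰 : Finset (Set (ℕ+ × ℕ+)),
          (∀ U ∈ 𝒰, ∀ a ∈ U, ∀ b ∈ U, starExDist a b ≤ r) ∧
          ({p : ℕ+ × ℕ+ | starExDist x p ≤ R} ⊆ ⋃ U ∈ 𝒰, U) ∧
          (𝒰.card : ℝ) ≤ C * (R / r) ^ α := by
  classical
  have key : ∀ n : ℕ+, ∃ S : Finset (ℕ+ × ℕ+), S.card = (n : ℕ) ∧
      (∀ p ∈ S, starExDist (n, 1) p ≤ (1 / 2 : ℝ) ^ (n : ℕ)) ∧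
      (∀ p ∈ S, ∀ q ∈ S, p ≠ q → starExDist p q = (1 / 2 : ℝ) ^ (n : ℕ)) := by
    intro n
    refine ⟨(Finset.Icc 1 n).image (fun m => (n, m)), ?_, ?_, ?_⟩
    · rw [Finset.card_image_of_injective _ (fun a b h => (Prod.ext_iff.mp h).2)]
      rw [PNat.card_Icc]
      simp
    · intro p hp
      simp only [Finset.mem_image, Finset.mem_Icc] at hp
      obtain ⟨m, ⟨-, hm⟩, rfl⟩ := hp
      by_cases h1 : (1 : ℕ+) = m
      · subst h1
        unfold starExDist
        simp only [if_pos rfl, if_pos rfl]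
        positivity
      · rw [starExDist_same_row n 1 m n.one_le hm h1]
    · intro p hp q hq hne
      simp only [Finset.mem_image, Finset.mem_Icc] at hp hq
      obtain ⟨m, ⟨-, hm⟩, rfl⟩ := hp
      obtain ⟨m', ⟨-, hm'⟩, rfl⟩ := hq
      exact starExDist_same_row n m m' hm hm' (fun h => hne (by rw [h]))
  have part2 : ∀ n : ℕ+, ∀ 𝒰 : Finset (Set (ℕ+ × ℕ+)),
      (∀ U ∈ 𝒰, ∀ a ∈ U, ∀ b ∈ U, starExDist a b ≤ (1 / 2 : ℝ) ^ ((n : ℕ) + 1)) →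
      ({p : ℕ+ × ℕ+ | starExDist (n, 1) p ≤ (1 / 2 : ℝ) ^ (n : ℕ)} ⊆ ⋃ U ∈ 𝒰, U) →
      (n : ℕ) ≤ 𝒰.card := by
    intro n 𝒰 hdiam hcov
    obtain ⟨S, hcard, hball, hpair⟩ := key n
    have hlt : (1 / 2 : ℝ) ^ ((n : ℕ) + 1) < (1 / 2 : ℝ) ^ (n : ℕ) := by
      have : (0:ℝ) < (1/2) ^ (n:ℕ) := by positivity
      rw [pow_succ]; nlinarith
    have hchoice : ∀ p ∈ S, ∃ U ∈ 𝒰, p ∈ U := by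
      intro p hp
      have := hcov (hball p hp)
      simpa using this
    choose f hf1 hf2 using hchoice
    rw [← hcard]
    set g : ℕ+ × ℕ+ → Set (ℕ+ × ℕ+) := fun p => if h : p ∈ S then f p h else ∅ with hg
    apply Finset.card_le_card_of_injOn g
    · intro p hp; simp only [hg, dif_pos (Finset.mem_coe.mp hp)]; exact hf1 p hp
    · intro p hp q hq hpq
      by_contra hne
      simp only [hg, Finset.mem_coe] at hp hq hpq
      rw [dif_pos hp, dif_pos hq] at hpq
      have h1 := hf2 p hp
      have h2 := hf2 q hq
      rw [hpq] at h1
      have := hdiam _ (hf1 q hq) p h1 q h2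
      rw [hpair p hp q hq hne] at this
      linarith
  refine ⟨key, part2, ?_⟩
  rintro ⟨α, hα, C, hC, h⟩
  obtain ⟨N, hN⟩ := exists_nat_gt (C * 2 ^ α)
  set n : ℕ+ := ⟨N + 1, Nat.succ_pos N⟩ with hn
  have hnn : (n : ℕ) = N + 1 := rfl
  obtain ⟨𝒰, h1, h2, h3⟩ := h (n, 1) ((1/2 : ℝ) ^ (n : ℕ)) ((1/2 : ℝ) ^ ((n : ℕ) + 1))
    (by positivity)
    (by
      have : (0:ℝ) < (1/2) ^ (n:ℕ) := by positivity
      rw [pow_succ]; nlinarith)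
    (by
      rw [hnn]
      exact pow_lt_one₀ (by norm_num) (by norm_num) (Nat.succ_ne_zero N))
  have hcard := part2 n 𝒰 h1 h2
  have hq : ((1/2 : ℝ) ^ (n : ℕ)) / ((1/2 : ℝ) ^ ((n : ℕ) + 1)) = 2 := by
    rw [pow_succ]
    have : (0:ℝ) < (1/2) ^ (n:ℕ) := by positivity
    field_simp
  rw [hq] at h3
  have : ((n : ℕ) : ℝ) ≤ (𝒰.card : ℝ) := by exact_mod_cast hcard
  have hNn : (C * 2 ^ α) < ((n : ℕ) : ℝ) := by
    rw [hnn]; push_cast; linarith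
  linarith
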